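/- Let A′ and A_σ be m×m real symmetric matrices, A_S an s×s real symmetric matrix, and A_δ an m×s real matrix, and let A be the (2m+s)×(2m+s) symmetric block matrix with block rows [A′, A_σ, A_δ], [A_σ, A′, A_δ], [A_δᵀ, A_δᵀ, A_S]. Then det(xI − A) = det(xI − A₊) · det(xI − A₋), where A₊ is the (m+s)×(m+s) block matrix with block rows [A′ + A_σ, A_δ], [2A_δᵀ, A_S] and A₋ = A′ − A_σ. Moreover, A has an eigenbasis consisting of vectors of the two forms [a; a; b] where [a; b] is an eigenvector of A₊, and [c; −c; 0] where c is an eigenvector of A₋ (each with the same eigenvalue as the corresponding eigenvector of A₊ or A₋). -/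

import Mathlib

open Matrix Polynomial

open Module

section Aux

variable {ι : Type*} [Fintype ι] [DecidableEq ι]

lemma charpoly_diagonal' (ev : ι → ℝ) :
    (Matrix.diagonal ev).charpoly = ∏ k, (X - C (ev k)) := by
  have h : charmatrix (Matrix.diagonal ev) = Matrix.diagonal (fun k => (X : ℝ[X]) - C (ev k)) := by
    ext i j
    by_cases hij : i = j
    · subst hij; simp [charmatrix_apply_eq]
    · rw [charmatrix_apply_ne _ _ _ hij, Matrix.diagonal_apply_ne _ hij,
        Matrix.diagonal_apply_ne _ hij]
      simp
  rw [Matrix.charpoly, h, Matrix.det_diagonal]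

lemma charpoly_eq_prod_of_eigenbasis (M : Matrix ι ι ℝ) (b : Basis ι ℝ (ι → ℝ)) (ev : ι → ℝ)
    (h : ∀ k, M *ᵥ b k = ev k • b k) :
    M.charpoly = ∏ k, (X - C (ev k)) := by
  have h1 : LinearMap.toMatrix b b (Matrix.toLin' M) = Matrix.diagonal ev := by
    ext i j
    rw [LinearMap.toMatrix_apply, Matrix.toLin'_apply, h j, _root_.map_smul]
    simp only [Basis.repr_self, Finsupp.smul_single, smul_eq_mul, mul_one,
      Finsupp.single_apply, Matrix.diagonal_apply]
    by_cases hij : i = j <;> simp [hij, eq_comm]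
  have h2 : M.charpoly = (LinearMap.toMatrix b b (Matrix.toLin' M)).charpoly := by
    rw [LinearMap.charpoly_toMatrix]
    conv_lhs => rw [show M = LinearMap.toMatrix (Pi.basisFun ℝ ι) (Pi.basisFun ℝ ι)
      (Matrix.toLin' M) by rw [LinearMap.toMatrix_eq_toMatrix', LinearMap.toMatrix'_toLin']]
    rw [LinearMap.charpoly_toMatrix]
  rw [h2, h1, charpoly_diagonal']

lemma sum_elim_congr {α β γ : Type*} {f f' : α → γ} {g g' : β → γ}
    (h1 : f = f') (h2 : g = g') : Sum.elim f g = Sum.elim f' g' := by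
  subst h1; subst h2; rfl

lemma smul_sum_elim {α β : Type*} (r : ℝ) (f : α → ℝ) (g : β → ℝ) :
    r • Sum.elim f g = Sum.elim (r • f) (r • g) := by
  funext k; cases k <;> rfl

end Aux

/-- The symmetric block matrix with block rows `[A', Aσ, Aδ]`, `[Aσ, A', Aδ]`,
`[Aδᵀ, Aδᵀ, A_S]`. -/
def bigBlock {m s : ℕ} (A' Aσ : Matrix (Fin m) (Fin m) ℝ)
    (Aδ : Matrix (Fin m) (Fin s) ℝ) (AS : Matrix (Fin s) (Fin s) ℝ) :
    Matrix (Fin m ⊕ (Fin m ⊕ Fin s)) (Fin m ⊕ (Fin m ⊕ Fin s)) ℝ :=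
  Matrix.of fun i j =>
    match i, j with
    | Sum.inl i, Sum.inl j => A' i j
    | Sum.inl i, Sum.inr (Sum.inl j) => Aσ i j
    | Sum.inl i, Sum.inr (Sum.inr j) => Aδ i j
    | Sum.inr (Sum.inl i), Sum.inl j => Aσ i j
    | Sum.inr (Sum.inl i), Sum.inr (Sum.inl j) => A' i j
    | Sum.inr (Sum.inl i), Sum.inr (Sum.inr j) => Aδ i j
    | Sum.inr (Sum.inr i), Sum.inl j => Aδ j i
    | Sum.inr (Sum.inr i), Sum.inr (Sum.inl j) => Aδ j i
    | Sum.inr (Sum.inr i), Sum.inr (Sum.inr j) => AS i j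

lemma bigBlock_mulVec {m s : ℕ} (A' Aσ : Matrix (Fin m) (Fin m) ℝ)
    (Aδ : Matrix (Fin m) (Fin s) ℝ) (AS : Matrix (Fin s) (Fin s) ℝ)
    (x y : Fin m → ℝ) (z : Fin s → ℝ) :
    bigBlock A' Aσ Aδ AS *ᵥ Sum.elim x (Sum.elim y z) =
      Sum.elim (A' *ᵥ x + Aσ *ᵥ y + Aδ *ᵥ z)
        (Sum.elim (Aσ *ᵥ x + A' *ᵥ y + Aδ *ᵥ z) (Aδᵀ *ᵥ x + Aδᵀ *ᵥ y + AS *ᵥ z)) := by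
  funext k
  rcases k with i | (i | i) <;>
    simp [bigBlock, Matrix.mulVec, dotProduct, Fintype.sum_sum_type,
      Finset.sum_add_distrib, Matrix.transpose_apply] <;> ring

set_option linter.unnecessarySeqFocus false in
/-- The reshuffling linear equivalence. -/
noncomputable def mixEquiv (m s : ℕ) :
    (((Fin m ⊕ Fin s) → ℝ) × (Fin m → ℝ)) ≃ₗ[ℝ] ((Fin m ⊕ (Fin m ⊕ Fin s)) → ℝ) where
  toFun p := Sum.elim (fun i => p.1 (Sum.inl i) + p.2 i)
    (Sum.elim (fun i => p.1 (Sum.inl i) - p.2 i) (fun j => Real.sqrt 2 * p.1 (Sum.inr j)))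
  invFun v := (Sum.elim (fun i => (v (Sum.inl i) + v (Sum.inr (Sum.inl i))) / 2)
      (fun j => v (Sum.inr (Sum.inr j)) / Real.sqrt 2),
    fun i => (v (Sum.inl i) - v (Sum.inr (Sum.inl i))) / 2)
  map_add' p q := by
    funext k; rcases k with i | (i | i) <;> simp <;> ring
  map_smul' r p := by
    funext k; rcases k with i | (i | i) <;> simp <;> ring
  left_inv p := by
    have h2 : Real.sqrt 2 ≠ 0 := by positivity
    refine Prod.ext (funext fun k => ?_) (funext fun i => ?_)
    · rcases k with i | i
      · simp; try ring
      · simp; try field_simp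
    · simp; try ring
  right_inv v := by
    have h2 : Real.sqrt 2 ≠ 0 := by positivity
    funext k
    rcases k with i | (i | i)
    · simp; try ring
    · simp; try ring
    · simp; try field_simp

set_option linter.unnecessarySeqFocus false in
/-- The scaling equivalence on the `+` part. -/
noncomputable def scaleEquiv (m s : ℕ) :
    ((Fin m ⊕ Fin s) → ℝ) ≃ₗ[ℝ] ((Fin m ⊕ Fin s) → ℝ) where
  toFun v := Sum.elim (fun i => v (Sum.inl i)) (fun j => Real.sqrt 2 * v (Sum.inr j))
  invFun v := Sum.elim (fun i => v (Sum.inl i)) (fun j => v (Sum.inr j) / Real.sqrt 2)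
  map_add' p q := by funext k; rcases k with i | i <;> simp <;> ring
  map_smul' r p := by funext k; rcases k with i | i <;> simp <;> ring
  left_inv p := by
    have h2 : Real.sqrt 2 ≠ 0 := by positivity
    funext k; rcases k with i | i
    · simp
    · simp; try field_simp
  right_inv v := by
    have h2 : Real.sqrt 2 ≠ 0 := by positivity
    funext k; rcases k with i | i
    · simp
    · simp; try field_simp

theorem stmt_16 {m s : ℕ} (A' Aσ : Matrix (Fin m) (Fin m) ℝ)
    (Aδ : Matrix (Fin m) (Fin s) ℝ) (AS : Matrix (Fin s) (Fin s) ℝ)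
    (hA' : A'.IsSymm) (hAσ : Aσ.IsSymm) (hAS : AS.IsSymm) :
    (bigBlock A' Aσ Aδ AS).charpoly =
        (Matrix.fromBlocks (A' + Aσ) Aδ ((2 : ℝ) • Aδᵀ) AS).charpoly *
          (A' - Aσ).charpoly ∧
    ∃ (b : Basis (Fin m ⊕ (Fin m ⊕ Fin s)) ℝ ((Fin m ⊕ (Fin m ⊕ Fin s)) → ℝ))
      (ev : (Fin m ⊕ (Fin m ⊕ Fin s)) → ℝ),
      ∀ k, bigBlock A' Aσ Aδ AS *ᵥ b k = ev k • (b k : (Fin m ⊕ (Fin m ⊕ Fin s)) → ℝ) ∧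
        ((∃ (a : Fin m → ℝ) (c : Fin s → ℝ), Sum.elim a c ≠ 0 ∧
            Matrix.fromBlocks (A' + Aσ) Aδ ((2 : ℝ) • Aδᵀ) AS *ᵥ Sum.elim a c =
              ev k • Sum.elim a c ∧
            (b k : (Fin m ⊕ (Fin m ⊕ Fin s)) → ℝ) = Sum.elim a (Sum.elim a c)) ∨
         (∃ c : Fin m → ℝ, c ≠ 0 ∧ (A' - Aσ) *ᵥ c = ev k • c ∧
            (b k : (Fin m ⊕ (Fin m ⊕ Fin s)) → ℝ) = Sum.elim c (Sum.elim (-c) 0))) := by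
  classical
  have sqrt2_ne : Real.sqrt 2 ≠ 0 := by positivity
  have sqrt2_sq : Real.sqrt 2 * Real.sqrt 2 = 2 := Real.mul_self_sqrt (by norm_num)
  set Ap : Matrix (Fin m ⊕ Fin s) (Fin m ⊕ Fin s) ℝ :=
    Matrix.fromBlocks (A' + Aσ) Aδ ((2 : ℝ) • Aδᵀ) AS with hApdef
  set B : Matrix (Fin m ⊕ Fin s) (Fin m ⊕ Fin s) ℝ :=
    Matrix.fromBlocks (A' + Aσ) (Real.sqrt 2 • Aδ) (Real.sqrt 2 • Aδᵀ) AS with hBdef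
  have hB : B.IsHermitian := by
    show Bᴴ = B
    ext i j
    simp only [Matrix.conjTranspose_apply, star_trivial]
    rcases i with i | i <;> rcases j with j | j <;>
      simp [hBdef, Matrix.fromBlocks, Matrix.add_apply, hA'.apply, hAσ.apply, hAS.apply]
  have hC : (A' - Aσ).IsHermitian := by
    show (A' - Aσ)ᴴ = A' - Aσ
    ext i j
    simp [Matrix.conjTranspose_apply, Matrix.sub_apply, hA'.apply, hAσ.apply]
  -- bases of plain function spaces
  set Pp : Basis (Fin m ⊕ Fin s) ℝ ((Fin m ⊕ Fin s) → ℝ) :=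
    hB.eigenvectorBasis.toBasis.map (WithLp.linearEquiv 2 ℝ _) with hPpdef
  set Pm : Basis (Fin m) ℝ ((Fin m) → ℝ) :=
    hC.eigenvectorBasis.toBasis.map (WithLp.linearEquiv 2 ℝ _) with hPmdef
  set μ : (Fin m ⊕ Fin s) → ℝ := hB.eigenvalues with hμdef
  set ν : Fin m → ℝ := hC.eigenvalues with hνdef
  have hμ : ∀ j, B *ᵥ Pp j = μ j • Pp j := by
    intro j
    have := hB.mulVec_eigenvectorBasis j
    simpa [hPpdef] using this
  have hν : ∀ j, (A' - Aσ) *ᵥ Pm j = ν j • Pm j := by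
    intro j
    have := hC.mulVec_eigenvectorBasis j
    simpa [hPmdef] using this
  -- component functions of the + eigenvectors
  set xx : (Fin m ⊕ Fin s) → (Fin m → ℝ) := fun j i => Pp j (Sum.inl i) with hxxdef
  set zz : (Fin m ⊕ Fin s) → (Fin s → ℝ) := fun j i => Pp j (Sum.inr i) with hzzdef
  have hPpdecomp : ∀ j, Pp j = Sum.elim (xx j) (zz j) := by
    intro j; funext k; cases k <;> rfl
  have hscale : ∀ j, (scaleEquiv m s) (Pp j) =
      Sum.elim (xx j) (Real.sqrt 2 • zz j) := by
    intro j; funext k; cases k <;> rfl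
  -- eigen equation for Ap
  have hplus : ∀ j, Ap *ᵥ Sum.elim (xx j) (Real.sqrt 2 • zz j) =
      μ j • Sum.elim (xx j) (Real.sqrt 2 • zz j) := by
    intro j
    have hw : B *ᵥ Sum.elim (xx j) (zz j) = μ j • Sum.elim (xx j) (zz j) := by
      rw [← hPpdecomp j]; exact hμ j
    rw [hBdef, Matrix.fromBlocks_mulVec, smul_sum_elim] at hw
    have e1 : (A' + Aσ) *ᵥ xx j + (Real.sqrt 2 • Aδ) *ᵥ zz j = μ j • xx j :=
      funext fun i => congrFun hw (Sum.inl i)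
    have e2 : (Real.sqrt 2 • Aδᵀ) *ᵥ xx j + AS *ᵥ zz j = μ j • zz j :=
      funext fun i => congrFun hw (Sum.inr i)
    rw [hApdef, Matrix.fromBlocks_mulVec, smul_sum_elim]
    simp only [Sum.elim_comp_inl, Sum.elim_comp_inr]
    refine sum_elim_congr ?_ ?_
    · rw [Matrix.mulVec_smul, ← Matrix.smul_mulVec]
      exact e1
    · have h2s : ((2:ℝ) • Aδᵀ) *ᵥ xx j = Real.sqrt 2 • ((Real.sqrt 2 • Aδᵀ) *ᵥ xx j) := by
        rw [Matrix.smul_mulVec, Matrix.smul_mulVec, smul_smul, sqrt2_sq]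
      rw [h2s, Matrix.mulVec_smul, ← smul_add, e2, smul_smul, smul_smul, mul_comm]
  -- big eigen equation, + side
  have hbigplus : ∀ j, bigBlock A' Aσ Aδ AS *ᵥ
        Sum.elim (xx j) (Sum.elim (xx j) (Real.sqrt 2 • zz j)) =
      μ j • Sum.elim (xx j) (Sum.elim (xx j) (Real.sqrt 2 • zz j)) := by
    intro j
    have hp := hplus j
    rw [hApdef, Matrix.fromBlocks_mulVec, smul_sum_elim] at hp
    have c1 : (A' + Aσ) *ᵥ xx j + Aδ *ᵥ (Real.sqrt 2 • zz j) = μ j • xx j :=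
      funext fun i => congrFun hp (Sum.inl i)
    have c2 : ((2:ℝ) • Aδᵀ) *ᵥ xx j + AS *ᵥ (Real.sqrt 2 • zz j) =
        μ j • (Real.sqrt 2 • zz j) :=
      funext fun i => congrFun hp (Sum.inr i)
    rw [bigBlock_mulVec, smul_sum_elim, smul_sum_elim]
    refine sum_elim_congr ?_ (sum_elim_congr ?_ ?_)
    · rw [← c1, Matrix.add_mulVec]
    · rw [← c1, Matrix.add_mulVec, add_comm (A' *ᵥ xx j) (Aσ *ᵥ xx j)]
    · rw [← c2, Matrix.smul_mulVec, two_smul]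
  -- big eigen equation, - side
  have hbigminus : ∀ i, bigBlock A' Aσ Aδ AS *ᵥ
        Sum.elim (Pm i) (Sum.elim (-(Pm i)) 0) =
      ν i • Sum.elim (Pm i) (Sum.elim (-(Pm i)) 0) := by
    intro i
    have hsub := hν i
    rw [Matrix.sub_mulVec] at hsub
    rw [bigBlock_mulVec, smul_sum_elim, smul_sum_elim]
    refine sum_elim_congr ?_ (sum_elim_congr ?_ ?_)
    · rw [Matrix.mulVec_neg, Matrix.mulVec_zero, add_zero, ← sub_eq_add_neg]
      exact hsub
    · rw [Matrix.mulVec_neg, Matrix.mulVec_zero, add_zero, smul_neg, ← hsub]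
      abel
    · rw [Matrix.mulVec_neg, Matrix.mulVec_zero, smul_zero]
      abel
  -- the basis
  set bb : Basis (Fin m ⊕ (Fin m ⊕ Fin s)) ℝ ((Fin m ⊕ (Fin m ⊕ Fin s)) → ℝ) :=
    ((Pp.prod Pm).map (mixEquiv m s)).reindex (Equiv.sumComm (Fin m ⊕ Fin s) (Fin m))
    with hbbdef
  have hbbL : ∀ i, bb (Sum.inl i) = Sum.elim (Pm i) (Sum.elim (-(Pm i)) 0) := by
    intro i
    rw [hbbdef, Basis.reindex_apply, Basis.map_apply]
    have he : (Equiv.sumComm (Fin m ⊕ Fin s) (Fin m)).symm (Sum.inl i) = Sum.inr i := rfl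
    rw [he]
    have hpr : (Pp.prod Pm) (Sum.inr i) = (0, Pm i) :=
      Prod.ext (Basis.prod_apply_inr_fst _ _ _) (Basis.prod_apply_inr_snd _ _ _)
    rw [hpr]
    funext k
    rcases k with q | (q | q) <;> simp [mixEquiv]
  have hbbR : ∀ j, bb (Sum.inr j) =
      Sum.elim (xx j) (Sum.elim (xx j) (Real.sqrt 2 • zz j)) := by
    intro j
    rw [hbbdef, Basis.reindex_apply, Basis.map_apply]
    have he : (Equiv.sumComm (Fin m ⊕ Fin s) (Fin m)).symm (Sum.inr j) = Sum.inl j := rfl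
    rw [he]
    have hpr : (Pp.prod Pm) (Sum.inl j) = (Pp j, 0) :=
      Prod.ext (Basis.prod_apply_inl_fst _ _ _) (Basis.prod_apply_inl_snd _ _ _)
    rw [hpr]
    funext k
    rcases k with q | (q | q) <;> simp [mixEquiv, hxxdef, hzzdef]
  have hxz_ne : ∀ j, Sum.elim (xx j) (Real.sqrt 2 • zz j) ≠ (0 : (Fin m ⊕ Fin s) → ℝ) := by
    intro j h
    have h0 : (scaleEquiv m s) (Pp j) = 0 := by rw [hscale j, h]
    exact Basis.ne_zero Pp j ((scaleEquiv m s).map_eq_zero_iff.mp h0)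
  set ev : (Fin m ⊕ (Fin m ⊕ Fin s)) → ℝ := Sum.elim ν μ with hevdef
  have hkey : ∀ k, bigBlock A' Aσ Aδ AS *ᵥ bb k = ev k • bb k := by
    intro k
    rcases k with i | j
    · rw [hbbL i]; exact hbigminus i
    · rw [hbbR j]; exact hbigplus j
  have hchAm : (A' - Aσ).charpoly = ∏ i, (X - C (ν i)) :=
    charpoly_eq_prod_of_eigenbasis _ Pm ν hν
  have hchAp : Ap.charpoly = ∏ j, (X - C (μ j)) := by
    refine charpoly_eq_prod_of_eigenbasis _ (Pp.map (scaleEquiv m s)) μ ?_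
    intro j
    rw [Basis.map_apply, hscale j]
    exact hplus j
  have hchbig : (bigBlock A' Aσ Aδ AS).charpoly = ∏ k, (X - C (ev k)) :=
    charpoly_eq_prod_of_eigenbasis _ bb ev hkey
  refine ⟨?_, bb, ev, fun k => ⟨hkey k, ?_⟩⟩
  · rw [hchbig, hchAp, hchAm, Fintype.prod_sum_type]
    simp only [hevdef, Sum.elim_inl, Sum.elim_inr]
    rw [mul_comm]
  · rcases k with i | j
    · exact Or.inr ⟨Pm i, Basis.ne_zero Pm i, hν i, hbbL i⟩
    · exact Or.inl ⟨xx j, Real.sqrt 2 • zz j, hxz_ne j, hplus j, hbbR j⟩
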